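/- Let 𝕌 be a measurable space and Q a probability measure on 𝕌 (the known distribution of the auxiliary variable). Let (Ω′, R) be a probability space and 𝒰 : Ω′ → Set 𝕌 a random set such that the graph {(u, ω′) : u ∈ 𝒰(ω′)} is measurable in 𝕌 × Ω′; define the random-set contour f(u) = R{ω′ : u ∈ 𝒰(ω′)}. Assume calibration: Q{u : f(u) ≤ α} ≤ α for all α ∈ [0,1] (in particular this holds when the pushforward of Q under f is the uniform distribution on {k/(n+1) : k = 1,…,n+1}). Let 𝒵 = 𝕏 × 𝕐, Ω a measurable space carrying measurable maps Z₁,…,Z_{n+1} : Ω → 𝒵 with Z_{n+1} = (X_{n+1}, Y_{n+1}), let 𝒫 be a family of probability measures on Ω, and let φ : 𝒵ⁿ × 𝒵 → 𝕌 be measurable such that for every P ∈ 𝒫 the law of U = φ(Z₁,…,Zₙ, Z_{n+1}) under P equals Q. Define the IM plausibility contour π(z₁,…,zₙ, x)(y) = f(φ(z₁,…,zₙ, (x,y))). Then the probabilistic predictor is uniformly valid: for every α ∈ [0,1] and every P ∈ 𝒫, P{ω : π(Z₁(ω),…,Zₙ(ω), X_{n+1}(ω))(Y_{n+1}(ω))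 ≤ α} ≤ α. -/

import Mathlib

open MeasureTheory
open scoped ENNReal

/-- Theorem 1: the IM-based probabilistic predictor is uniformly valid.
Given a calibrated random set `𝒰` on the auxiliary space `𝕌` with contour
`f u = R {ω' | u ∈ 𝒰 ω'}` satisfying `Q{f ≤ α} ≤ α`, and an association `φ` whose value at
the data has law `Q` under every `P ∈ 𝒫`, the plausibility contour
`π(zⁿ,x)(y) = f(φ(zⁿ,(x,y)))` evaluated at `(Zⁿ, X_{n+1}, Y_{n+1})` is stochastically no
smaller than uniform. -/
theorem stmt_5 {𝕌 Ω' 𝕏 𝕐 Ω : Type*}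
    [MeasurableSpace 𝕌] [MeasurableSpace Ω'] [MeasurableSpace 𝕏] [MeasurableSpace 𝕐]
    [MeasurableSpace Ω]
    (Q : Measure 𝕌) [IsProbabilityMeasure Q]
    (R : Measure Ω') [IsProbabilityMeasure R]
    (𝒰 : Ω' → Set 𝕌)
    (hgraph : MeasurableSet {p : 𝕌 × Ω' | p.1 ∈ 𝒰 p.2})
    (hcal : ∀ α : ℝ≥0∞, α ≤ 1 → Q {u | R {ω' | u ∈ 𝒰 ω'} ≤ α} ≤ α)
    (n : ℕ) (Z : Fin (n + 1) → Ω → 𝕏 × 𝕐) (hZ : ∀ i, Measurable (Z i))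
    (𝓟 : Set (Measure Ω)) (hprob : ∀ P ∈ 𝓟, IsProbabilityMeasure P)
    (φ : (Fin n → 𝕏 × 𝕐) × (𝕏 × 𝕐) → 𝕌) (hφ : Measurable φ)
    (hlaw : ∀ P ∈ 𝓟,
      Measure.map (fun ω => φ (fun i => Z i.castSucc ω, Z (Fin.last n) ω)) P = Q) :
    ∀ α : ℝ≥0∞, α ≤ 1 → ∀ P ∈ 𝓟,
      P {ω | R {ω' | φ (fun i => Z i.castSucc ω,
        ((Z (Fin.last n) ω).1, (Z (Fin.last n) ω).2)) ∈ 𝒰 ω'} ≤ α} ≤ α := by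
  intro α hα P hP
  have hf : Measurable fun u => R {ω' | u ∈ 𝒰 ω'} := by
    have := measurable_measure_prodMk_left (ν := R) hgraph
    simpa using this
  have hg : Measurable fun ω => φ (fun i => Z i.castSucc ω, Z (Fin.last n) ω) :=
    hφ.comp ((measurable_pi_lambda _ fun (i : Fin n) => hZ i.castSucc).prodMk (hZ (Fin.last n)))
  have hs : MeasurableSet {u | R {ω' | u ∈ 𝒰 ω'} ≤ α} := hf measurableSet_Iic
  have : P {ω | R {ω' | φ (fun i => Z i.castSucc ω, Z (Fin.last n) ω) ∈ 𝒰 ω'} ≤ α}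
      = Q {u | R {ω' | u ∈ 𝒰 ω'} ≤ α} := by
    rw [← hlaw P hP, Measure.map_apply hg hs]
    rfl
  calc P {ω | R {ω' | φ (fun i => Z i.castSucc ω,
        ((Z (Fin.last n) ω).1, (Z (Fin.last n) ω).2)) ∈ 𝒰 ω'} ≤ α}
      = Q {u | R {ω' | u ∈ 𝒰 ω'} ≤ α} := by simpa using this
    _ ≤ α := hcal α hα
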